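/- arXiv:2004.05309 — 4 statements merged into one kernel-verified Lean document; each statement's English description precedes it below -/
import Mathlib

section
/- For every Lyndon word w of length at least 2, there exist strings u and v with w = uv such that v is the longest proper suffix of w that is a Lyndon word, and both u and v are Lyndon words. -/
open List

variable {α : Type*} [LinearOrder α]

/-- A nonempty string is a Lyndon word if it is lexicographically strictly
smaller than every nonempty proper suffix. -/
def IsLyndon (w : List α) : Prop :=
  w ≠ [] ∧ ∀ u v : List α, w = u ++ v → u ≠ [] → v ≠ [] → w < v

private lemma list_lt_iff_lex (l l' : List α) : l < l' ↔ List.Lex (· < ·) l l' := Iff.rfl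

private lemma lex_cancel_left {b c : List α} (a : List α) (h : a ++ b < a ++ c) : b < c := by
  induction a with
  | nil => exact h
  | cons x a ih =>
    apply ih
    have h' : List.Lex (· < ·) (x :: (a ++ b)) (x :: (a ++ c)) := h
    cases h' with
    | cons h => exact h
    | rel h => exact absurd h (lt_irrefl x)

private lemma lt_append_of_lt_not_prefix {x y : List α} (h : x < y) (hp : ¬ x <+: y)
    (a b : List α) : x ++ a < y ++ b := by
  induction x generalizing y with
  | nil => exact absurd nil_prefix hp
  | cons xh xt ih =>
    cases y with
    | nil =>
      exact absurd h (by rw [list_lt_iff_lex]; intro h'; cases h')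
    | cons yh yt =>
      have h' : List.Lex (· < ·) (xh :: xt) (yh :: yt) := h
      cases h' with
      | rel hr => exact List.Lex.rel hr
      | cons hc =>
        have hnp : ¬ xt <+: yt := fun hpre => hp (List.cons_prefix_cons.2 ⟨rfl, hpre⟩)
        exact List.Lex.cons (ih hc hnp)

theorem stmt2 (w : List α) (hw : IsLyndon w) (h2 : 2 ≤ w.length) :
    ∃ u v : List α, w = u ++ v ∧ u ≠ [] ∧ v ≠ [] ∧ IsLyndon u ∧ IsLyndon v ∧
      ∀ s : List α, s <:+ w → s ≠ w → IsLyndon s → s.length ≤ v.length := by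
  classical
  obtain ⟨hne, hlyn⟩ := hw
  set L : List (List α) := w.tails.filter (fun s => decide (s ≠ [] ∧ s.length < w.length)) with hL
  have hmemL : ∀ s : List α, s ∈ L ↔ (s <:+ w ∧ s ≠ [] ∧ s.length < w.length) := by
    intro s
    simp [hL, List.mem_filter, List.mem_tails]
  have htail : w.tail ∈ L := by
    rw [hmemL]
    refine ⟨List.tail_suffix w, ?_, ?_⟩
    · intro h
      have := congrArg List.length h
      simp [List.length_tail] at this
      omega
    · simp [List.length_tail]; omega
  have hLne : L ≠ [] := fun h => by simp [h] at htail
  obtain ⟨v, hv⟩ : ∃ v : List α, L.minimum = (v : WithTop (List α)) := by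
    cases h : L.minimum with
    | top => exact absurd (List.minimum_eq_top.1 h) hLne
    | coe v => exact ⟨v, rfl⟩
  have hvL : v ∈ L := List.minimum_mem hv
  have hvmin : ∀ s : List α, s <:+ w → s ≠ [] → s.length < w.length → v ≤ s := by
    intro s h1 h3 h4
    exact List.minimum_le_of_mem ((hmemL s).2 ⟨h1, h3, h4⟩) (by convert hv)
  rw [hmemL] at hvL
  obtain ⟨hvsuf, hvne, hvlen⟩ := hvL
  obtain ⟨u, hu⟩ := id hvsuf
  have hune : u ≠ [] := by
    intro h; rw [h] at hu; simp at hu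
    rw [hu] at hvlen; omega
  refine ⟨u, v, hu.symm, hune, hvne, ⟨hune, ?_⟩, ⟨hvne, ?_⟩, ?_⟩
  · -- u is Lyndon
    intro a s hus ha hs
    by_contra hlt
    have hsu : s ≤ u := le_of_not_gt hlt
    have hsvsuf : s ++ v <:+ w := by
      rw [← hu, hus]; exact ⟨a, by simp⟩
    by_cases hpre : s <+: u
    · -- s is a prefix of u; u = s ++ t
      obtain ⟨t, ht⟩ := hpre
      have htne : t ≠ [] := by
        intro h; rw [h] at ht; simp at ht
        have h1 := congrArg List.length hus
        have h2 := congrArg List.length ht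
        simp at h1 h2
        have : 0 < a.length := List.length_pos_iff.2 ha
        omega
      -- w < s ++ v  since  w = a ++ (s ++ v)
      have h1 : w < s ++ v := by
        refine hlyn a (s ++ v) ?_ ha (by simp [hs])
        rw [← hu, hus]; simp
      -- w = s ++ (t ++ v)
      have h2 : s ++ (t ++ v) < s ++ v := by
        have : w = s ++ (t ++ v) := by rw [← hu, ← ht]; simp
        rwa [this] at h1
      have h3 : t ++ v < v := lex_cancel_left s h2
      have h4 : v ≤ t ++ v := by
        apply hvmin
        · rw [← hu, ← ht]; exact ⟨s, by simp⟩
        · simp [htne]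
        · rw [← hu, ← ht]
          simp only [List.length_append]
          have : 0 < s.length := List.length_pos_iff.2 hs
          omega
      exact absurd (lt_of_le_of_lt h4 h3) (lt_irrefl _)
    · -- s is not a prefix of u
      have hslt : s < u := lt_of_le_of_ne hsu (fun h => hpre (h ▸ List.prefix_refl s))
      have h1 : s ++ v < u ++ v := lt_append_of_lt_not_prefix hslt hpre v v
      have h2 : w < s ++ v := by
        obtain ⟨a', ha'⟩ := hsvsuf
        have ha'ne : a' ≠ [] := by
          intro h; rw [h] at ha'; simp at ha'
          have hsu' : s = u := List.append_cancel_right (ha'.trans hu.symm)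
          exact hpre (hsu' ▸ List.prefix_refl s)
        exact hlyn a' (s ++ v) ha'.symm ha'ne (by simp [hs])
      rw [hu] at h1
      exact absurd (lt_trans h2 h1) (lt_irrefl _)
  · -- v is Lyndon
    intro a b hab ha hb
    have hbv : b <:+ v := ⟨a, hab.symm⟩
    have hbsuf : b <:+ w := hbv.trans hvsuf
    have hblen : b.length < v.length := by
      rw [hab]; simp only [List.length_append]
      have : 0 < a.length := List.length_pos_iff.2 ha
      omega
    have h1 : v ≤ b := hvmin b hbsuf hb (by omega)
    exact lt_of_le_of_ne h1 (fun h => by rw [h] at hblen; omega)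
  · -- maximality
    intro s hsuf hsne hslyn
    by_contra hlt
    push_neg at hlt
    have hvs : v <:+ s := by
      rcases List.suffix_or_suffix_of_suffix hvsuf hsuf with h | h
      · exact h
      · exact absurd (h.length_le) (by omega)
    obtain ⟨a, ha⟩ := hvs
    have hane : a ≠ [] := by
      intro h; rw [h] at ha; simp at ha; rw [ha] at hlt; omega
    have h1 : s < v := hslyn.2 a v ha.symm hane hvne
    have hslen : s.length < w.length := by
      have := hsuf.length_le
      rcases lt_or_eq_of_le this with h | h
      · exact h
      · exact absurd (hsuf.eq_of_length h) hsne
    have h2 : v ≤ s := hvmin s hsuf hslyn.1 hslen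
    exact absurd (lt_of_le_of_lt h2 h1) (lt_irrefl _)
end

section
/- If (u, v) is the standard factorization of a Lyndon word w of length at least 2, then u is lexicographically strictly smaller than v. -/
open List

variable {α : Type*} [LinearOrder α]

/-- `(u, v)` is the standard factorization of the Lyndon word `u ++ v`:
`v` is the longest proper suffix of `u ++ v` that is a Lyndon word. -/
def IsStdFact (u v : List α) : Prop :=
  IsLyndon (u ++ v) ∧ u ≠ [] ∧ v ≠ [] ∧ IsLyndon v ∧
    ∀ s : List α, s <:+ u ++ v → s ≠ u ++ v → IsLyndon s → s.length ≤ v.length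

lemma lex_append_self_aux (l t : List α) : ¬ List.Lex (· < ·) (l ++ t) l := by
  induction l with
  | nil => simp
  | cons a l ih =>
    intro hlt
    exact ih (List.lex_cons_iff.mp hlt)

theorem stmt3 (u v : List α) (h : IsStdFact u v) : u < v := by
  obtain ⟨hw, hu, hv, hlv, hmax⟩ := h
  by_contra h'
  have hvu : v ≤ u := le_of_not_gt h'
  have huv : u ++ v < v := hw.2 u v rfl hu hv
  have hle : u ≤ u ++ v := le_of_not_gt (lex_append_self_aux u v)
  exact absurd (lt_of_le_of_lt (hvu.trans hle) huv) (lt_irrefl v)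
end

section
/- The longest prefix of a nonempty string P that is a Lyndon word equals the first factor of the Lyndon factorization of P. -/
open List

variable {α : Type*} [LinearOrder α]

private lemma lt_append_right (u t : List α) (ht : t ≠ []) : u < u ++ t := by
  induction u with
  | nil => cases t with
    | nil => exact absurd rfl ht
    | cons a l => exact List.nil_lt_cons a l
  | cons a l ih =>
    show Lex (· < ·) (a :: l) (a :: (l ++ t))
    exact List.Lex.cons (ih)

private lemma prefix_le {u v : List α} (h : u <+: v) : u ≤ v := by
  obtain ⟨t, rfl⟩ := h
  rcases eq_or_ne t [] with rfl | ht
  · simp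
  · exact le_of_lt (lt_append_right u t ht)

/-- every nonempty prefix of a join of factors all `≤ b` decomposes as
`s ++ u` with `u` a nonempty prefix of one factor, hence `u ≤ b`. -/
private lemma key (b : List α) :
    ∀ (G : List (List α)) (q : List α), (∀ g ∈ G, g ≤ b) → q ≠ [] →
      q <+: G.flatten → ∃ s u : List α, q = s ++ u ∧ u ≠ [] ∧ u ≤ b := by
  intro G
  induction G with
  | nil => intro q _ hq hpre; simp at hpre; exact absurd hpre hq
  | cons g G' ih =>
    intro q hle hq hpre
    simp only [flatten_cons] at hpre
    by_cases hlen : q.length ≤ g.length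
    · have hqg : q <+: g :=
        List.prefix_of_prefix_length_le hpre (List.prefix_append g G'.flatten) hlen
      exact ⟨[], q, by simp, hq, le_trans (prefix_le hqg) (hle g (by simp))⟩
    · push_neg at hlen
      have hgq : g <+: q :=
        List.prefix_of_prefix_length_le (List.prefix_append g G'.flatten) hpre (le_of_lt hlen)
      obtain ⟨q', rfl⟩ := hgq
      have hq' : q' ≠ [] := by
        intro h; subst h; simp at hlen
      have hpre' : q' <+: G'.flatten := by
        rwa [List.prefix_append_right_inj] at hpre
      obtain ⟨s, u, hsu, hu, hub⟩ := ih q' (fun f hf => hle f (by simp [hf])) hq' hpre'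
      exact ⟨g ++ s, u, by rw [hsu, List.append_assoc], hu, hub⟩

theorem stmt5 (P : List α) (F : List (List α)) (hne : F ≠ [])
    (hP : P = F.flatten) (hLyn : ∀ f ∈ F, IsLyndon f)
    (hdec : F.Chain' (· ≥ ·)) :
    F.head hne <+: P ∧ IsLyndon (F.head hne) ∧
      ∀ q : List α, q <+: P → IsLyndon q → q.length ≤ (F.head hne).length := by
  obtain ⟨P₁, T, rfl⟩ : ∃ P₁ T, F = P₁ :: T := by
    cases F with
    | nil => exact absurd rfl hne
    | cons a l => exact ⟨a, l, rfl⟩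
  simp only [List.head_cons]
  subst hP
  have hjoin : (P₁ :: T).flatten = P₁ ++ T.flatten := by simp
  have hTle : ∀ f ∈ T, f ≤ P₁ := by
    have hpw : (P₁ :: T).Pairwise (· ≥ ·) :=
      List.isChain_iff_pairwise.mp hdec
    intro f hf
    exact (List.pairwise_cons.mp hpw).1 f hf
  refine ⟨by rw [hjoin]; exact List.prefix_append _ _, hLyn P₁ (by simp), ?_⟩
  intro q hq hqLyn
  by_contra hlen
  push_neg at hlen
  have hP₁q : P₁ <+: q := by
    rw [hjoin] at hq
    exact List.prefix_of_prefix_length_le (List.prefix_append _ _) hq (le_of_lt hlen)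
  obtain ⟨r, rfl⟩ := hP₁q
  have hr : r ≠ [] := by intro h; subst h; simp at hlen
  have hrpre : r <+: T.flatten := by
    rw [hjoin, List.prefix_append_right_inj] at hq; exact hq
  obtain ⟨s, u, hsu, hu, hub⟩ := key P₁ T r hTle hr hrpre
  have hP₁ne : P₁ ≠ [] := (hLyn P₁ (by simp)).1
  -- q < u from Lyndon property
  have hqu : P₁ ++ r < u := by
    apply hqLyn.2 (P₁ ++ s) u (by rw [hsu, List.append_assoc])
      (by simp [hP₁ne]) hu
  -- P₁ < q since P₁ is a proper prefix
  have hP₁lt : P₁ < P₁ ++ r := lt_append_right P₁ r hr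
  exact absurd (lt_of_lt_of_le (lt_trans hqu (lt_of_le_of_lt hub hP₁lt)) le_rfl) (lt_irrefl _)
end

section
/- In the Lyndon factorization P = P_1 P_2 ... P_k of a nonempty string P, the last factor P_k is the lexicographically smallest nonempty suffix of P. -/
open List

variable {α : Type*} [LinearOrder α]

private lemma my_le_append (a b t : List α) (h : a ≤ b) : a ≤ b ++ t := by
  rcases lt_or_eq_of_le h with h' | rfl
  · exact le_of_lt (List.Lex.append_right _ t h')
  · -- a ≤ a ++ t
    induction a with
    | nil => cases t with
      | nil => exact le_refl _
      | cons x xs => exact le_of_lt List.Lex.nil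
    | cons y ys ih =>
      cases t with
      | nil => simp
      | cons x xs =>
        have : ys ≤ ys ++ (x :: xs) := ih le_rfl
        rcases lt_or_eq_of_le this with h'' | h''
        · exact le_of_lt (List.Lex.cons h'')
        · exact absurd (List.append_right_eq_self.mp h''.symm) (by simp)

private lemma lyndon_le_suffix {w v : List α} (hw : IsLyndon w) (hv : v <:+ w)
    (hvne : v ≠ []) : w ≤ v := by
  obtain ⟨u, rfl⟩ := hv
  rcases eq_or_ne u [] with rfl | hu
  · simp
  · exact le_of_lt (hw.2 u v rfl hu hvne)

private lemma suffix_append_cases {v a b : List α} (h : v <:+ a ++ b) :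
    v <:+ b ∨ ∃ s, s <:+ a ∧ s ≠ [] ∧ v = s ++ b := by
  obtain ⟨t, ht⟩ := h
  rcases List.append_eq_append_iff.mp ht with ⟨a', ha, hv⟩ | ⟨c, _, hb⟩
  · rcases eq_or_ne a' [] with rfl | ha'
    · left; simp [hv]
    · right; exact ⟨a', ⟨t, ha.symm⟩, ha', hv⟩
  · left; exact ⟨c, hb.symm⟩

private lemma key_lemma : ∀ (F : List (List α)) (hne : F ≠ []),
    (∀ f ∈ F, IsLyndon f) → F.Chain' (· ≥ ·) →
    ∀ v : List α, v <:+ F.flatten → v ≠ [] → F.getLast hne ≤ v := by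
  intro F
  induction F with
  | nil => intro h; exact absurd rfl h
  | cons w F ih =>
    intro _ hLyn hdec v hv hvne
    cases F with
    | nil =>
      simp only [List.flatten, List.append_eq, List.append_nil] at hv
      simpa using lyndon_le_suffix (hLyn w (by simp)) hv hvne
    | cons f G =>
      have hne' : f :: G ≠ [] := by simp
      have hlast : (w :: f :: G).getLast (by simp) = (f :: G).getLast hne' :=
        List.getLast_cons hne'
      rw [hlast]
      have hjoin : (w :: f :: G).flatten = w ++ (f :: G).flatten := rfl
      rw [hjoin] at hv
      rcases suffix_append_cases hv with h | ⟨s, hs, hsne, rfl⟩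
      · exact ih hne' (fun g hg => hLyn g (by simp [hg])) hdec.tail v h hvne
      · -- v = s ++ join, s nonempty suffix of w
        have hws : w ≤ s := lyndon_le_suffix (hLyn w (by simp)) hs hsne
        have hLw : (f :: G).getLast hne' ≤ w := by
          have hp : (w :: f :: G).Pairwise (· ≥ ·) :=
            (List.isChain_iff_pairwise).mp hdec
          exact (List.pairwise_cons.mp hp).1 _ (List.getLast_mem hne')
        calc (f :: G).getLast hne' ≤ w := hLw
          _ ≤ s := hws
          _ ≤ s ++ (f :: G).flatten := my_le_append s s _ (le_refl s)

theorem stmt13 (P : List α) (hP : P ≠ []) (F : List (List α)) (hne : F ≠ [])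
    (hPF : P = F.flatten) (hLyn : ∀ f ∈ F, IsLyndon f)
    (hdec : F.Chain' (· ≥ ·)) :
    F.getLast hne <:+ P ∧ F.getLast hne ≠ [] ∧
      ∀ v : List α, v <:+ P → v ≠ [] → F.getLast hne ≤ v := by
  have hLne : F.getLast hne ≠ [] := (hLyn _ (List.getLast_mem hne)).1
  refine ⟨?_, hLne, ?_⟩
  · subst hPF
    conv_rhs => rw [← List.dropLast_append_getLast hne]
    exact ⟨(F.dropLast).flatten, by simp⟩
  · intro v hv hvne
    exact key_lemma F hne hLyn hdec v (hPF ▸ hv) hvne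
end
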